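/- Let A : E → F be a closed, densely defined unbounded operator between Hilbert spaces, and let B : E → E be a bounded self-adjoint operator. Then the unbounded operator A* ∘ A + B (with domain D(A* ∘ A)) is self-adjoint. -/

import Mathlib

open LinearPMap

local notation "⟪" x ", " y "⟫" => @inner ℂ _ _ x y

/-- If `A : E → F` is a closed densely defined unbounded operator between
Hilbert spaces and `B : E → E` is a bounded self-adjoint operator, then the unbounded
operator `A† ∘ A + B`, with domain `{x ∈ D(A) | A x ∈ D(A†)}` and acting by
`x ↦ A† (A x) + B x`, is self-adjoint (equal to its own adjoint). -/
theorem stmt2 {E F : Type*} [NormedAddCommGroup E] [InnerProductSpace ℂ E] [CompleteSpace E]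
    [NormedAddCommGroup F] [InnerProductSpace ℂ F] [CompleteSpace F]
    (A : E →ₗ.[ℂ] F) (hA : Dense (A.domain : Set E)) (hclosed : LinearPMap.IsClosed A)
    (B : E →L[ℂ] E) (hB : IsSelfAdjoint B)
    (T : E →ₗ.[ℂ] E)
    (hdom : ∀ x : E, x ∈ T.domain ↔
      ∃ hx : x ∈ A.domain, A ⟨x, hx⟩ ∈ A.adjoint.domain)
    (happ : ∀ (x : E) (hx : x ∈ A.domain) (hx' : A ⟨x, hx⟩ ∈ A.adjoint.domain),
      T ⟨x, (hdom x).mpr ⟨hx, hx'⟩⟩ = A.adjoint ⟨A ⟨x, hx⟩, hx'⟩ + B x) :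
    T.adjoint = T := by
  classical
  -- basic data about `T`
  have h1 : ∀ u : T.domain, ∃ hx : (u : E) ∈ A.domain,
      A ⟨(u : E), hx⟩ ∈ A.adjoint.domain := fun u => (hdom u).mp u.2
  set Adom : T.domain → A.domain := fun u => ⟨(u : E), (h1 u).choose⟩ with hAdom
  have hAu : ∀ u : T.domain, A (Adom u) ∈ A.adjoint.domain := fun u => (h1 u).choose_spec
  have hTval : ∀ u : T.domain, T u = A.adjoint ⟨A (Adom u), hAu u⟩ + B u := by
    intro u
    have := happ (u : E) (h1 u).choose (h1 u).choose_spec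
    rwa [show (⟨(u : E), (hdom (u : E)).mpr ⟨(h1 u).choose, (h1 u).choose_spec⟩⟩ :
      T.domain) = u from Subtype.ext rfl] at this
  -- the formal adjoint property of `A†`
  have hfa := A.adjoint_isFormalAdjoint hA
  -- symmetry facts for `A†A`
  have fact1 : ∀ (u : T.domain) (v : A.domain),
      ⟪(T u - B u : E), (v : E)⟫ = ⟪A (Adom u), A v⟫ := by
    intro u v
    rw [hTval u, add_sub_cancel_right]
    exact hfa ⟨A (Adom u), hAu u⟩ v
  have fact2 : ∀ (u : A.domain) (v : T.domain),
      ⟪A u, A (Adom v)⟫ = ⟪(u : E), (T v - B v : E)⟫ := by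
    intro u v
    calc ⟪A u, A (Adom v)⟫ = (starRingEnd ℂ) ⟪A (Adom v), A u⟫ := (inner_conj_symm _ _).symm
      _ = (starRingEnd ℂ) ⟪(T v - B v : E), (u : E)⟫ := by rw [fact1 v u]
      _ = ⟪(u : E), (T v - B v : E)⟫ := inner_conj_symm _ _
  have hsymAA : ∀ u v : T.domain,
      ⟪(T u - B u : E), (v : E)⟫ = ⟪(u : E), (T v - B v : E)⟫ := by
    intro u v
    have h := fact1 u (Adom v)
    have h' := fact2 (Adom u) v
    exact h.trans h'
  -- symmetry of `B`
  have hBsym : ∀ a b : E, ⟪B a, b⟫ = ⟪a, B b⟫ := by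
    intro a b
    conv_lhs => rw [← hB.adjoint_eq]
    exact ContinuousLinearMap.adjoint_inner_left B b a
  -- symmetry of `T`
  have hsymT : ∀ u v : T.domain, ⟪(T u : E), (v : E)⟫ = ⟪(u : E), (T v : E)⟫ := by
    intro u v
    have h := hsymAA u v
    rw [inner_sub_left, inner_sub_right, hBsym (u : E) (v : E)] at h
    linear_combination h
  -- key surjectivity: `1 + A†A` is surjective
  have key : ∀ w : E, ∃ x : T.domain, (x : E) + ((T x : E) - B x) = w := by
    set e : WithLp 2 (E × F) ≃L[ℂ] E × F := WithLp.prodContinuousLinearEquiv 2 ℂ E F with he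
    set G : Submodule ℂ (WithLp 2 (E × F)) :=
      A.graph.comap (e.toLinearEquiv : WithLp 2 (E × F) ≃ₗ[ℂ] E × F).toLinearMap with hG
    have hGset : (G : Set (WithLp 2 (E × F))) = ⇑e ⁻¹' (A.graph : Set (E × F)) := rfl
    have hGclosed : IsClosed (G : Set (WithLp 2 (E × F))) := by
      rw [hGset]; exact hclosed.preimage e.continuous
    haveI : CompleteSpace G := hGclosed.completeSpace_coe
    intro w
    obtain ⟨p, hpG, r, hr, hzsum⟩ := G.exists_add_mem_mem_orthogonal (e.symm (w, 0))
    have hpA : e p ∈ A.graph := hpG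
    obtain ⟨x, hx1, hx2⟩ := A.mem_graph_iff.mp hpA
    -- r is in the orthogonal complement of the graph
    have hrperp : ∀ v : A.domain, ⟪(v : E), (e r).1⟫ + ⟪A v, (e r).2⟫ = 0 := by
      intro v
      have hmem : e.symm ((v : E), A v) ∈ G := by
        show e (e.symm ((v : E), A v)) ∈ A.graph
        rw [e.apply_symm_apply]
        exact A.mem_graph v
      have h0 := (Submodule.mem_orthogonal G r).mp hr _ hmem
      rw [show (inner ℂ (e.symm ((v : E), A v)) r : ℂ) =
        ⟪(v : E), (e r).1⟫ + ⟪A v, (e r).2⟫ from rfl] at h0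
      exact h0
    have hrw : ∀ v : A.domain, ⟪-(e r).1, (v : E)⟫ = ⟪(e r).2, A v⟫ := by
      intro v
      have hc : ⟪(e r).1, (v : E)⟫ + ⟪(e r).2, A v⟫ = 0 := by
        have := congrArg (starRingEnd ℂ) (hrperp v)
        simpa [inner_conj_symm] using this
      rw [inner_neg_left]
      linear_combination -hc
    have hr2mem : (e r).2 ∈ A.adjoint.domain :=
      mem_adjoint_domain_of_exists _ ⟨-(e r).1, hrw⟩
    have hadj : A.adjoint ⟨(e r).2, hr2mem⟩ = -(e r).1 :=
      adjoint_apply_eq hA _ hrw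
    -- decompose components
    have hcomp : (w, (0 : F)) = e p + e r := by
      have := congrArg e hzsum
      rwa [e.apply_symm_apply, _root_.map_add] at this
    have hw1 : w = (x : E) + (e r).1 := by
      have := congrArg Prod.fst hcomp
      simpa [← hx1] using this
    have hAx : A x = -(e r).2 := by
      have := congrArg Prod.snd hcomp
      simp only [Prod.snd_add, ← hx2] at this
      exact eq_neg_of_add_eq_zero_left this.symm
    have hAxmem : A ⟨(x : E), x.2⟩ ∈ A.adjoint.domain := by
      rw [show (⟨(x : E), x.2⟩ : A.domain) = x from Subtype.ext rfl, hAx]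
      exact neg_mem hr2mem
    have hxT : (x : E) ∈ T.domain := (hdom x).mpr ⟨x.2, hAxmem⟩
    refine ⟨⟨(x : E), hxT⟩, ?_⟩
    have hT1 : T ⟨(x : E), hxT⟩ = A.adjoint ⟨A ⟨(x : E), x.2⟩, hAxmem⟩ + B (x : E) :=
      happ (x : E) x.2 hAxmem
    have hval : A.adjoint ⟨A ⟨(x : E), x.2⟩, hAxmem⟩ = (e r).1 := by
      have hsub : (⟨A ⟨(x : E), x.2⟩, hAxmem⟩ : A.adjoint.domain) =
          -(⟨(e r).2, hr2mem⟩ : A.adjoint.domain) := by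
        apply Subtype.ext
        show A ⟨(x : E), x.2⟩ = -(e r).2
        rw [show (⟨(x : E), x.2⟩ : A.domain) = x from Subtype.ext rfl]
        exact hAx
      rw [hsub, LinearPMap.map_neg, hadj, neg_neg]
    rw [hT1, hval]
    rw [hw1]
    abel
  -- density of the domain of `T`
  have hTdense : Dense (T.domain : Set E) := by
    rw [Submodule.dense_iff_topologicalClosure_eq_top,
      Submodule.topologicalClosure_eq_top_iff, Submodule.eq_bot_iff]
    intro w hw
    obtain ⟨x, hx⟩ := key w
    have h0 : ⟪(x : E), w⟫ = 0 := (Submodule.mem_orthogonal T.domain w).mp hw _ x.2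
    rw [← hx, inner_add_right] at h0
    have h2 : ⟪(x : E), ((T x : E) - B x)⟫ = ⟪A (Adom x), A (Adom x)⟫ :=
      (fact2 (Adom x) x).symm
    rw [h2, inner_self_eq_norm_sq_to_K, inner_self_eq_norm_sq_to_K] at h0
    have h4 : (‖(x : E)‖ ^ 2 + ‖A (Adom x)‖ ^ 2 : ℝ) = 0 := by
      have h3 : ((‖(x : E)‖ ^ 2 + ‖A (Adom x)‖ ^ 2 : ℝ) : ℂ) = 0 := by
        rw [Complex.ofReal_add, Complex.ofReal_pow, Complex.ofReal_pow]; exact h0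
      exact_mod_cast h3
    have h5 : ‖(x : E)‖ = 0 := by nlinarith [norm_nonneg (x : E), norm_nonneg (A (Adom x)), sq_nonneg ‖(x : E)‖, sq_nonneg ‖A (Adom x)‖]
    have hx0 : x = 0 := Subtype.ext (norm_eq_zero.mp h5)
    rw [← hx, hx0]
    simp
  -- `T` is symmetric, hence `T ≤ T†`
  have hTle : T ≤ T.adjoint :=
    IsFormalAdjoint.le_adjoint hTdense (show T.IsFormalAdjoint T from fun u v => hsymT u v)
  -- the formal adjoint property of `T†`
  have hTadj := T.adjoint_isFormalAdjoint hTdense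
  -- `T† ≤ T`
  have claim : ∀ y : T.adjoint.domain, ∃ hyT : (y : E) ∈ T.domain,
      T ⟨(y : E), hyT⟩ = T.adjoint y := by
    intro y
    set w : E := T.adjoint y with hwdef
    obtain ⟨x, hx⟩ := key ((y : E) + w - B (y : E))
    have horth : ∀ u : T.domain, ⟪(y : E) - (x : E), (u : E) + ((T u : E) - B u)⟫ = 0 := by
      intro u
      have e1 : ⟪(y : E), (T u : E)⟫ = ⟪w, (u : E)⟫ := (hTadj y u).symm
      have e2 : ⟪(y : E), (B (u : E) : E)⟫ = ⟪B (y : E), (u : E)⟫ := (hBsym _ _).symm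
      have e3 := hsymAA x u
      have e4 : ((y : E) + w - B (y : E)) - ((x : E) + ((T x : E) - B (x : E))) = 0 :=
        sub_eq_zero.mpr hx.symm
      have e5 : ⟪((y : E) + w - B (y : E)) - ((x : E) + ((T x : E) - B (x : E))), (u : E)⟫
          = 0 := by rw [e4]; exact inner_zero_left _
      simp only [inner_sub_left, inner_add_left, inner_add_right, inner_sub_right] at e3 e5 ⊢
      linear_combination e5 + e3 + e1 - e2
    have hyx : (y : E) = (x : E) := by
      obtain ⟨u, hu⟩ := key ((y : E) - (x : E))
      have := horth u
      rw [hu] at this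
      have h0 := inner_self_eq_zero.mp this
      exact sub_eq_zero.mp h0
    have hyT : (y : E) ∈ T.domain := by rw [hyx]; exact x.2
    refine ⟨hyT, ?_⟩
    have hTx : T ⟨(y : E), hyT⟩ = T x := by
      congr 1
      exact Subtype.ext hyx
    rw [hTx]
    have e4 : ((x : E) + ((T x : E) - B (x : E))) = (y : E) + w - B (y : E) := hx
    rw [← hyx, add_sub_assoc] at e4
    have h2 := add_left_cancel e4
    exact sub_left_inj.mp h2
  have hdomle : T.adjoint.domain ≤ T.domain := fun z hz => (claim ⟨z, hz⟩).choose
  have hvals : ∀ ⦃a : T.adjoint.domain⦄ ⦃b : T.domain⦄, (a : E) = (b : E) →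
      T.adjoint a = T b := by
    intro a b hab
    obtain ⟨h, hval⟩ := claim a
    rw [← hval]
    congr 1
    exact Subtype.ext hab
  exact le_antisymm (And.intro hdomle hvals) hTle
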